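/- Let (V, g) be a finite-dimensional real inner product space. The map sending a skew-adjoint endomorphism F with F³ + F = 0 to the (−i)-eigenspace of its complexification is a bijection between the set of skew-adjoint f-structures on (V, g) and the set of isotropic complex subspaces of V ⊗ ℂ (with respect to the bilinear extension of g). -/

import Mathlib

open scoped TensorProduct InnerProductSpace

namespace Stmt4Aux
set_option linter.unusedSectionVars false
variable {V : Type*} [NormedAddCommGroup V] [InnerProductSpace ℝ V] [FiniteDimensional ℝ V]

/-- Conjugation on the complexification. -/
noncomputable def σ : (ℂ ⊗[ℝ] V) →ₗ[ℝ] (ℂ ⊗[ℝ] V) :=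
  TensorProduct.map Complex.conjAe.toLinearMap LinearMap.id

@[simp] lemma σ_tmul (c : ℂ) (v : V) : σ (c ⊗ₜ[ℝ] v) = (starRingEnd ℂ) c ⊗ₜ[ℝ] v := rfl

lemma σ_σ (x : ℂ ⊗[ℝ] V) : σ (σ x) = x := by
  induction x using TensorProduct.induction_on with
  | zero => simp
  | tmul c v => simp
  | add a b ha hb => simp [map_add, ha, hb]

lemma σ_smul (c : ℂ) (x : ℂ ⊗[ℝ] V) : σ (c • x) = (starRingEnd ℂ) c • σ x := by
  induction x using TensorProduct.induction_on with
  | zero => simp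
  | tmul d v => rw [TensorProduct.smul_tmul', σ_tmul, σ_tmul, TensorProduct.smul_tmul', smul_eq_mul, smul_eq_mul, map_mul]
  | add a b ha hb => simp [smul_add, map_add, ha, hb]

/-- The complexified bilinear form. -/
noncomputable def Bc : LinearMap.BilinForm ℂ (ℂ ⊗[ℝ] V) :=
  LinearMap.BilinForm.baseChange ℂ (innerₗ V : LinearMap.BilinForm ℝ V)

lemma Bc_tmul (a b : ℂ) (v w : V) : Bc (a ⊗ₜ[ℝ] v) (b ⊗ₜ[ℝ] w) = a * b * (⟪v,w⟫_ℝ : ℂ) := by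
  show (innerₗ V v w) • (a * b) = _
  rw [Algebra.smul_def]
  show (⟪v,w⟫_ℝ : ℂ) * (a*b) = _
  ring

lemma Bc_symm (x y : ℂ ⊗[ℝ] V) : Bc x y = Bc y x := by
  have h : (Bc (V := V)).IsSymm := by
    unfold Bc
    rw [LinearMap.BilinForm.isSymm_iff]
    apply LinearMap.BilinForm.IsSymm.baseChange
    constructor
    intro a b
    simpa using real_inner_comm b a
  simpa using h.eq x y

lemma Bc_conj (x y : ℂ ⊗[ℝ] V) : Bc (σ x) (σ y) = (starRingEnd ℂ) (Bc x y) := by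
  induction x using TensorProduct.induction_on with
  | zero => simp
  | tmul a v =>
    induction y using TensorProduct.induction_on with
    | zero => simp
    | tmul b w =>
      simp only [σ_tmul, Bc_tmul, map_mul]
      congr 1
      exact (Complex.conj_ofReal _).symm
    | add y1 y2 h1 h2 => simp only [map_add, h1, h2]
  | add x1 x2 h1 h2 => simp only [map_add, LinearMap.add_apply, h1, h2]


/-- Real-part projection. -/
noncomputable def πre : (ℂ ⊗[ℝ] V) →ₗ[ℝ] V :=
  TensorProduct.lift (LinearMap.mk₂ ℝ (fun c v => c.re • v)
    (fun m m' n => by simp [add_smul])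
    (fun c m n => by show ((c • m).re) • n = c • (m.re • n); rw [Complex.smul_re, smul_eq_mul, mul_smul])
    (fun m n n' => by simp)
    (fun c m n => by show m.re • (c • n) = c • (m.re • n); rw [smul_comm]))

/-- Imaginary-part projection. -/
noncomputable def πim : (ℂ ⊗[ℝ] V) →ₗ[ℝ] V :=
  TensorProduct.lift (LinearMap.mk₂ ℝ (fun c v => c.im • v)
    (fun m m' n => by simp [add_smul])
    (fun c m n => by show ((c • m).im) • n = c • (m.im • n); rw [Complex.smul_im, smul_eq_mul, mul_smul])
    (fun m n n' => by simp)
    (fun c m n => by show m.im • (c • n) = c • (m.im • n); rw [smul_comm]))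

@[simp] lemma πre_tmul (c : ℂ) (v : V) : πre (c ⊗ₜ[ℝ] v) = c.re • v := rfl
@[simp] lemma πim_tmul (c : ℂ) (v : V) : πim (c ⊗ₜ[ℝ] v) = c.im • v := rfl

lemma decomp (x : ℂ ⊗[ℝ] V) :
    x = (1 : ℂ) ⊗ₜ[ℝ] πre x + Complex.I ⊗ₜ[ℝ] πim x := by
  induction x using TensorProduct.induction_on with
  | zero => simp
  | tmul c v =>
    rw [πre_tmul, πim_tmul, TensorProduct.tmul_smul, TensorProduct.tmul_smul,
      TensorProduct.smul_tmul', TensorProduct.smul_tmul', ← TensorProduct.add_tmul]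
    congr 1
    simp [Complex.real_smul, Complex.ext_iff]
  | add a b ha hb =>
    rw [map_add, map_add, TensorProduct.tmul_add, TensorProduct.tmul_add]
    rw [show (1:ℂ) ⊗ₜ[ℝ] πre a + (1:ℂ) ⊗ₜ[ℝ] πre b + (Complex.I ⊗ₜ[ℝ] πim a + Complex.I ⊗ₜ[ℝ] πim b)
      = ((1:ℂ) ⊗ₜ[ℝ] πre a + Complex.I ⊗ₜ[ℝ] πim a) + ((1:ℂ) ⊗ₜ[ℝ] πre b + Complex.I ⊗ₜ[ℝ] πim b) by abel]
    rw [← ha, ← hb]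

lemma πre_one_tmul (v : V) : πre ((1:ℂ) ⊗ₜ[ℝ] v) = v := by simp

lemma πim_σ (x : ℂ ⊗[ℝ] V) : πim (σ x) = - πim x := by
  induction x using TensorProduct.induction_on with
  | zero => simp
  | tmul c v => simp [Complex.conj_im, neg_smul]
  | add a b ha hb => rw [map_add, map_add, map_add, ha, hb]; abel

lemma real_of_σ_fixed {x : ℂ ⊗[ℝ] V} (h : σ x = x) : x = (1:ℂ) ⊗ₜ[ℝ] πre x := by
  have him : πim x = 0 := by
    have h2 : πim (σ x) = - πim x := πim_σ x
    rw [h] at h2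
    have := eq_neg_iff_add_eq_zero.mp h2
    have h3 : (2:ℝ) • πim x = 0 := by rw [two_smul]; exact this
    simpa using h3
  conv_lhs => rw [decomp x, him]
  simp

lemma σ_one_tmul (v : V) : σ ((1:ℂ) ⊗ₜ[ℝ] v) = (1:ℂ) ⊗ₜ[ℝ] v := by simp

lemma Bc_pos (x : ℂ ⊗[ℝ] V) : Bc (σ x) x = ((⟪πre x, πre x⟫_ℝ + ⟪πim x, πim x⟫_ℝ : ℝ) : ℂ) := by
  set a := πre x; set b := πim x
  have hx := decomp x
  have hσ : σ x = (1:ℂ) ⊗ₜ[ℝ] a - Complex.I ⊗ₜ[ℝ] b := by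
    conv_lhs => rw [hx]
    rw [map_add, σ_tmul, σ_tmul]
    simp [Complex.conj_I, TensorProduct.neg_tmul, sub_eq_add_neg]; rfl
  rw [hσ]; conv_lhs => rw [hx]
  simp only [map_sub, map_add, LinearMap.sub_apply, LinearMap.add_apply, Bc_tmul]
  rw [real_inner_comm b a]
  push_cast
  linear_combination (-(⟪b,b⟫_ℝ : ℂ)) * Complex.I_mul_I

lemma Bc_pos_def {x : ℂ ⊗[ℝ] V} (h : Bc (σ x) x = 0) : x = 0 := by
  rw [Bc_pos] at h
  have h' : (⟪πre x, πre x⟫_ℝ + ⟪πim x, πim x⟫_ℝ : ℝ) = 0 := by exact_mod_cast h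
  have h1 : πre x = 0 := by
    have := real_inner_self_nonneg (x := πre x)
    have := real_inner_self_nonneg (x := πim x)
    have : ⟪πre x, πre x⟫_ℝ = 0 := by linarith
    exact inner_self_eq_zero.mp this
  have h2 : πim x = 0 := by
    have := real_inner_self_nonneg (x := πre x)
    have := real_inner_self_nonneg (x := πim x)
    have : ⟪πim x, πim x⟫_ℝ = 0 := by linarith
    exact inner_self_eq_zero.mp this
  rw [decomp x, h1, h2]; simp

lemma Bc_one_tmul (v w : V) : Bc ((1:ℂ) ⊗ₜ[ℝ] v) ((1:ℂ) ⊗ₜ[ℝ] w) = (⟪v,w⟫_ℝ : ℂ) := by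
  rw [Bc_tmul]; ring


section endo
variable {A : (ℂ ⊗[ℝ] V) →ₗ[ℂ] ℂ ⊗[ℝ] V}

lemma claimA (hskew : ∀ x y, Bc (A x) y + Bc x (A y) = 0)
    (hσ : ∀ x, σ (A x) = A (σ x)) {x : ℂ ⊗[ℝ] V} (hx : A x = 0)
    {z : ℂ ⊗[ℝ] V} (hz : z ∈ Module.End.eigenspace A (-Complex.I)) :
    Bc (σ z) x = 0 ∧ Bc z x = 0 := by
  rw [Module.End.mem_eigenspace_iff] at hz
  constructor
  · have h1 := hskew (σ z) x
    rw [hx, map_zero, add_zero] at h1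
    rw [← hσ, hz, σ_smul] at h1
    simp only [map_neg, Complex.conj_I, neg_neg, map_smul, LinearMap.smul_apply,
      smul_eq_mul] at h1
    have := mul_eq_zero.mp h1
    simpa [Complex.I_ne_zero] using this
  · have h1 := hskew z x
    rw [hx, map_zero, add_zero, hz] at h1
    simp only [map_smul, LinearMap.smul_apply, smul_eq_mul, neg_mul] at h1
    have : Complex.I * (Bc z) x = 0 := by linear_combination -h1
    have := mul_eq_zero.mp this
    simpa [Complex.I_ne_zero] using this

/-- The three spectral components. -/
lemma decomp3 (h3 : ∀ x, A (A (A x)) + A x = 0) (x : ℂ ⊗[ℝ] V) :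
    ∃ x₀ xp xm, x = x₀ + xp + xm ∧ A x₀ = 0 ∧ A xp = Complex.I • xp ∧
      A xm = (-Complex.I) • xm := by
  refine ⟨x + A (A x), -((2:ℂ)⁻¹ • (A (A x) + Complex.I • A x)),
    -((2:ℂ)⁻¹ • (A (A x) - Complex.I • A x)), ?_, ?_, ?_, ?_⟩
  · module
  · rw [map_add]
    linear_combination (norm := abel) h3 x
  · simp only [map_neg, map_smul, map_add]
    have hAx3 : A (A (A x)) = - A x := by linear_combination (norm := abel) h3 x
    rw [hAx3]
    match_scalars <;> simp [Complex.ext_iff]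
  · simp only [map_neg, map_smul, map_sub]
    have hAx3 : A (A (A x)) = - A x := by linear_combination (norm := abel) h3 x
    rw [hAx3]
    match_scalars <;> simp [Complex.ext_iff]

lemma mem_p_iff_σ (hσ : ∀ x, σ (A x) = A (σ x)) {x : ℂ ⊗[ℝ] V}
    (hx : A x = Complex.I • x) : A (σ x) = (-Complex.I) • σ x := by
  rw [← hσ, hx, σ_smul]
  simp [Complex.conj_I]

lemma ker_char (hskew : ∀ x y, Bc (A x) y + Bc x (A y) = 0)
    (hσ : ∀ x, σ (A x) = A (σ x)) (h3 : ∀ x, A (A (A x)) + A x = 0) (x : ℂ ⊗[ℝ] V) :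
    A x = 0 ↔ ∀ z ∈ Module.End.eigenspace A (-Complex.I), Bc (σ z) x = 0 ∧ Bc z x = 0 := by
  constructor
  · intro hx z hz
    exact claimA hskew hσ hx hz
  · intro h
    obtain ⟨x₀, xp, xm, hsum, h0, hp, hm⟩ := decomp3 h3 x
    have hxm_mem : xm ∈ Module.End.eigenspace A (-Complex.I) :=
      Module.End.mem_eigenspace_iff.mpr hm
    have hσxp_mem : σ xp ∈ Module.End.eigenspace A (-Complex.I) :=
      Module.End.mem_eigenspace_iff.mpr (mem_p_iff_σ hσ hp)
    set m := xp + xm with hm_def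
    have hBmx : Bc (σ m) x = 0 := by
      rw [hm_def, map_add, map_add, LinearMap.add_apply]
      have e1 : Bc (σ xp) x = 0 := by
        have := (h (σ xp) hσxp_mem).2
        exact this
      have e2 : Bc (σ xm) x = 0 := (h xm hxm_mem).1
      rw [e1, e2, add_zero]
    have hBmx0 : Bc (σ m) x₀ = 0 := by
      rw [hm_def, map_add, map_add, LinearMap.add_apply]
      have e1 : Bc (σ xp) x₀ = 0 := (claimA hskew hσ h0 hσxp_mem).2
      have e2 : Bc (σ xm) x₀ = 0 := (claimA hskew hσ h0 hxm_mem).1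
      rw [e1, e2, add_zero]
    have hmm : Bc (σ m) m = 0 := by
      have hx0 : m = x - x₀ := by rw [hsum, hm_def]; abel
      nth_rewrite 2 [hx0]
      rw [map_sub, hBmx, hBmx0, sub_zero]
    have : m = 0 := Bc_pos_def hmm
    rw [hsum, show x₀ + xp + xm = x₀ + m by rw [hm_def]; abel, this, add_zero, h0]
end endo


section real
variable (F : V →ₗ[ℝ] V)

lemma σ_baseChange (x : ℂ ⊗[ℝ] V) :
    σ (LinearMap.baseChange ℂ F x) = LinearMap.baseChange ℂ F (σ x) := by
  induction x using TensorProduct.induction_on with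
  | zero => simp
  | tmul c v => simp [LinearMap.baseChange_tmul]
  | add a b ha hb => simp [map_add, ha, hb]

lemma baseChange_skew (hF : ∀ x y : V, ⟪F x, y⟫_ℝ + ⟪x, F y⟫_ℝ = 0)
    (x y : ℂ ⊗[ℝ] V) :
    Bc (LinearMap.baseChange ℂ F x) y + Bc x (LinearMap.baseChange ℂ F y) = 0 := by
  induction x using TensorProduct.induction_on with
  | zero => simp
  | tmul a v =>
    induction y using TensorProduct.induction_on with
    | zero => simp
    | tmul b w =>
      simp only [LinearMap.baseChange_tmul, Bc_tmul]
      have := hF v w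
      have hc : ((⟪F v, w⟫_ℝ : ℂ) + (⟪v, F w⟫_ℝ : ℂ)) = 0 := by
        rw [← Complex.ofReal_add, this, Complex.ofReal_zero]
      linear_combination (a * b) * hc
    | add y1 y2 h1 h2 =>
      simp only [map_add] at *
      linear_combination (norm := abel) h1 + h2
  | add x1 x2 h1 h2 =>
    simp only [map_add, LinearMap.add_apply] at *
    linear_combination (norm := abel) h1 + h2

lemma baseChange_cube (hF : F ∘ₗ F ∘ₗ F + F = 0) (x : ℂ ⊗[ℝ] V) :
    LinearMap.baseChange ℂ F (LinearMap.baseChange ℂ F (LinearMap.baseChange ℂ F x))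
      + LinearMap.baseChange ℂ F x = 0 := by
  have h := congrArg (fun G => LinearMap.baseChange ℂ G x) hF
  simpa [LinearMap.baseChange_add, LinearMap.baseChange_comp, LinearMap.comp_apply] using h

lemma one_tmul_injective {v w : V} (h : (1:ℂ) ⊗ₜ[ℝ] v = (1:ℂ) ⊗ₜ[ℝ] w) : v = w := by
  have := congrArg πre h
  simpa using this

end real


lemma injective_part : Function.Injective
      (fun F : {F : V →ₗ[ℝ] V //
          F ∘ₗ F ∘ₗ F + F = 0 ∧ ∀ x y : V, ⟪F x, y⟫_ℝ + ⟪x, F y⟫_ℝ = 0} =>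
        Module.End.eigenspace (LinearMap.baseChange ℂ F.1) (-Complex.I)) := by
  rintro ⟨F, hF3, hFs⟩ ⟨G, hG3, hGs⟩ h
  simp only at h
  have hFG : ∀ x, LinearMap.baseChange ℂ F x = LinearMap.baseChange ℂ G x := by
    intro x
    obtain ⟨x₀, xp, xm, hsum, h0, hp, hm⟩ := decomp3 (baseChange_cube F hF3) x
    have hker : LinearMap.baseChange ℂ G x₀ = 0 := by
      rw [ker_char (baseChange_skew G hGs) (σ_baseChange G) (baseChange_cube G hG3)]
      rw [← h]
      exact fun z hz => claimA (baseChange_skew F hFs) (σ_baseChange F) h0 hz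
    have hxm : LinearMap.baseChange ℂ G xm = -Complex.I • xm := by
      have hmem : xm ∈ Module.End.eigenspace (LinearMap.baseChange ℂ G) (-Complex.I) := by
        rw [← h]; exact Module.End.mem_eigenspace_iff.mpr hm
      exact Module.End.mem_eigenspace_iff.mp hmem
    have hxp : LinearMap.baseChange ℂ G xp = Complex.I • xp := by
      have h1 : σ xp ∈ Module.End.eigenspace (LinearMap.baseChange ℂ G) (-Complex.I) := by
        rw [← h]; exact Module.End.mem_eigenspace_iff.mpr (mem_p_iff_σ (σ_baseChange F) hp)
      have h2 := Module.End.mem_eigenspace_iff.mp h1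
      have h3 : LinearMap.baseChange ℂ G (σ (σ xp)) = σ (-Complex.I • σ xp) := by
        rw [← σ_baseChange, h2]
      rw [σ_smul] at h3
      simp only [σ_σ] at h3
      simpa [map_neg, Complex.conj_I, neg_neg] using h3
    rw [hsum]
    simp only [map_add, h0, hxm, hxp, hp, hm, hker]
  have hFGeq : F = G := by
    ext v
    have h1 := hFG ((1:ℂ) ⊗ₜ[ℝ] v)
    rw [LinearMap.baseChange_tmul, LinearMap.baseChange_tmul] at h1
    exact one_tmul_injective h1
  exact Subtype.ext hFGeq


/-- The conjugate of a complex submodule of the complexification. -/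
noncomputable def conjSub (p : Submodule ℂ (ℂ ⊗[ℝ] V)) : Submodule ℂ (ℂ ⊗[ℝ] V) where
  carrier := σ '' p
  add_mem' := by rintro a b ⟨x, hx, rfl⟩ ⟨y, hy, rfl⟩; exact ⟨x + y, p.add_mem hx hy, (map_add σ x y).symm ▸ rfl⟩
  zero_mem' := ⟨0, p.zero_mem, map_zero σ⟩
  smul_mem' := by
    rintro c a ⟨x, hx, rfl⟩
    exact ⟨(starRingEnd ℂ) c • x, p.smul_mem _ hx, by rw [σ_smul]; simp⟩

lemma mem_conjSub {p : Submodule ℂ (ℂ ⊗[ℝ] V)} {x : ℂ ⊗[ℝ] V} :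
    x ∈ conjSub p ↔ σ x ∈ p := by
  constructor
  · rintro ⟨y, hy, rfl⟩; rwa [σ_σ]
  · intro h; exact ⟨σ x, h, σ_σ x⟩

lemma Bc_isSymm : (Bc (V := V)).IsSymm := by
  constructor
  intro x y
  simpa using Bc_symm x y

set_option maxHeartbeats 2000000 in
lemma exists_F_of_isotropic (p : Submodule ℂ (ℂ ⊗[ℝ] V))
    (hiso : ∀ v ∈ p, ∀ w ∈ p, Bc v w = 0) :
    ∃ F : {F : V →ₗ[ℝ] V //
        F ∘ₗ F ∘ₗ F + F = 0 ∧ ∀ x y : V, ⟪F x, y⟫_ℝ + ⟪x, F y⟫_ℝ = 0},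
      Module.End.eigenspace (LinearMap.baseChange ℂ F.1) (-Complex.I) = p := by
  classical
  set pb := conjSub p with hpb
  set M := p ⊔ pb with hM
  set q := Bc.orthogonal M with hq
  -- basic membership facts
  have hiso_pb : ∀ v ∈ pb, ∀ w ∈ pb, Bc v w = 0 := by
    rintro v ⟨a, ha, rfl⟩ w ⟨b, hb, rfl⟩
    rw [Bc_conj, hiso a ha b hb, map_zero]
  have hσM : ∀ m ∈ M, σ m ∈ M := by
    intro m hm
    rcases Submodule.mem_sup.mp hm with ⟨u, hu, s, hs, rfl⟩
    rw [map_add]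
    exact Submodule.add_mem _ (Submodule.mem_sup_right (mem_conjSub.mpr ((σ_σ u).symm ▸ hu)))
      (Submodule.mem_sup_left (mem_conjSub.mp hs))
  have hqB : ∀ t ∈ q, ∀ n ∈ M, Bc n t = 0 := by
    intro t ht n hn
    exact (LinearMap.BilinForm.mem_orthogonal_iff.mp ht) n hn
  have hqB' : ∀ t ∈ q, ∀ n ∈ M, Bc t n = 0 := by
    intro t ht n hn
    rw [Bc_symm]; exact hqB t ht n hn
  have hσq : ∀ t ∈ q, σ t ∈ q := by
    intro t ht
    rw [hq, LinearMap.BilinForm.mem_orthogonal_iff]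
    intro n hn
    show Bc n (σ t) = 0
    calc Bc n (σ t) = Bc (σ (σ n)) (σ t) := by rw [σ_σ]
    _ = (starRingEnd ℂ) (Bc (σ n) t) := Bc_conj _ _
    _ = 0 := by rw [hqB t ht (σ n) (hσM n hn), map_zero]
  -- IsCompl M q
  have hMq : IsCompl M q := by
    apply LinearMap.BilinForm.isCompl_orthogonal_of_restrict_nondegenerate Bc_isSymm.isRefl
    refine (LinearMap.IsRefl.nondegenerate_iff_separatingLeft (B := Bc.restrict M) (fun a b h => (Bc_isSymm (V := V)).isRefl _ _ h)).mpr ?_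
    intro m hm
    have h0 : Bc (σ (m : ℂ ⊗[ℝ] V)) (m : ℂ ⊗[ℝ] V) = 0 := by
      have := hm ⟨σ (m : ℂ ⊗[ℝ] V), hσM _ m.2⟩
      rw [Bc_symm]
      simpa using this
    exact Subtype.ext (Bc_pos_def h0)
  -- IsCompl p (pb ⊔ q) and IsCompl pb (p ⊔ q)
  have hp_le_M : p ≤ M := le_sup_left
  have hpb_le_M : pb ≤ M := le_sup_right
  have hdisj1 : Disjoint p (pb ⊔ q) := by
    rw [Submodule.disjoint_def]
    intro x hx hx'
    rcases Submodule.mem_sup.mp hx' with ⟨s, hs, t, ht, rfl⟩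
    have hσx : σ (s + t) ∈ pb := mem_conjSub.mpr ((σ_σ (s+t)).symm ▸ hx)
    apply Bc_pos_def (x := s + t)
    have e1 : Bc (σ (s + t)) s = 0 := hiso_pb _ hσx s hs
    have e2 : Bc (σ (s + t)) t = 0 := hqB t ht _ (hpb_le_M hσx)
    rw [map_add, e1, e2, add_zero]
  have hdisj2 : Disjoint pb (p ⊔ q) := by
    rw [Submodule.disjoint_def]
    intro x hx hx'
    rcases Submodule.mem_sup.mp hx' with ⟨s, hs, t, ht, rfl⟩
    have hσx : σ (s + t) ∈ p := mem_conjSub.mp hx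
    apply Bc_pos_def (x := s + t)
    have e1 : Bc (σ (s + t)) s = 0 := hiso _ hσx s hs
    have e2 : Bc (σ (s + t)) t = 0 := hqB t ht _ (hp_le_M hσx)
    rw [map_add, e1, e2, add_zero]
  have hcompl1 : IsCompl p (pb ⊔ q) := by
    refine ⟨hdisj1, codisjoint_iff.mpr ?_⟩
    rw [← sup_assoc, ← hM]
    exact codisjoint_iff.mp hMq.codisjoint
  have hcompl2 : IsCompl pb (p ⊔ q) := by
    refine ⟨hdisj2, codisjoint_iff.mpr ?_⟩
    rw [← sup_assoc, sup_comm pb p, ← hM]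
    exact codisjoint_iff.mp hMq.codisjoint
  -- the projections and the endomorphism A
  set P : (ℂ ⊗[ℝ] V) →ₗ[ℂ] ℂ ⊗[ℝ] V := p.subtype ∘ₗ p.projectionOnto _ hcompl1 with hP
  set Q : (ℂ ⊗[ℝ] V) →ₗ[ℂ] ℂ ⊗[ℝ] V := pb.subtype ∘ₗ pb.projectionOnto _ hcompl2 with hQ
  set A : (ℂ ⊗[ℝ] V) →ₗ[ℂ] ℂ ⊗[ℝ] V := Complex.I • Q - Complex.I • P with hA
  have hPp : ∀ x ∈ p, P x = x := fun x hx => by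
    rw [hP]; simp [Submodule.projectionOnto_apply_of_mem_left hcompl1 hx]
  have hPk : ∀ x ∈ pb ⊔ q, P x = 0 := fun x hx => by
    rw [hP]; simp [Submodule.projectionOnto_apply_of_mem_right hcompl1 hx]
  have hQp : ∀ x ∈ pb, Q x = x := fun x hx => by
    rw [hQ]; simp [Submodule.projectionOnto_apply_of_mem_left hcompl2 hx]
  have hQk : ∀ x ∈ p ⊔ q, Q x = 0 := fun x hx => by
    rw [hQ]; simp [Submodule.projectionOnto_apply_of_mem_right hcompl2 hx]
  have hAp : ∀ x ∈ p, A x = (-Complex.I) • x := by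
    intro x hx
    rw [hA]
    simp only [LinearMap.sub_apply, LinearMap.smul_apply]
    rw [hPp x hx, hQk x (Submodule.mem_sup_left hx)]
    simp
  have hApb : ∀ x ∈ pb, A x = Complex.I • x := by
    intro x hx
    rw [hA]
    simp only [LinearMap.sub_apply, LinearMap.smul_apply]
    rw [hQp x hx, hPk x (Submodule.mem_sup_left hx)]
    simp
  have hAq : ∀ x ∈ q, A x = 0 := by
    intro x hx
    rw [hA]
    simp only [LinearMap.sub_apply, LinearMap.smul_apply]
    rw [hQk x (Submodule.mem_sup_right hx), hPk x (Submodule.mem_sup_right hx)]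
    simp
  -- decomposition of an arbitrary vector
  clear_value A
  have hdec : ∀ x : ℂ ⊗[ℝ] V, ∃ u s t, u ∈ p ∧ s ∈ pb ∧ t ∈ q ∧ x = u + s + t := by
    intro x
    have hx : x ∈ M ⊔ q := by rw [codisjoint_iff.mp hMq.codisjoint]; trivial
    rcases Submodule.mem_sup.mp hx with ⟨m, hm, t, ht, rfl⟩
    rcases Submodule.mem_sup.mp hm with ⟨u, hu, s, hs, rfl⟩
    exact ⟨u, s, t, hu, hs, ht, rfl⟩
  have hAx : ∀ u s t, u ∈ p → s ∈ pb → t ∈ q →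
      A (u + s + t) = (-Complex.I) • u + Complex.I • s := by
    intro u s t hu hs ht
    rw [map_add, map_add, hAp u hu, hApb s hs, hAq t ht, add_zero]
  have hσA : ∀ x, σ (A x) = A (σ x) := by
    intro x
    obtain ⟨u, s, t, hu, hs, ht, rfl⟩ := hdec x
    have hσu : σ u ∈ pb := mem_conjSub.mpr ((σ_σ u).symm ▸ hu)
    have hσs : σ s ∈ p := mem_conjSub.mp hs
    have hσt : σ t ∈ q := hσq t ht
    rw [hAx u s t hu hs ht, map_add, σ_smul, σ_smul]
    rw [show σ (u + s + t) = σ u + σ s + σ t by rw [map_add, map_add]]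
    rw [map_add, map_add, hApb _ hσu, hAp _ hσs, hAq _ hσt, add_zero]
    simp only [map_neg, Complex.conj_I, neg_neg]
  have h3 : ∀ x, A (A (A x)) + A x = 0 := by
    intro x
    obtain ⟨u, s, t, hu, hs, ht, rfl⟩ := hdec x
    have e1 : A (u + s + t) = (-Complex.I) • u + Complex.I • s := hAx u s t hu hs ht
    have e2 : A ((-Complex.I) • u + Complex.I • s) = - u - s := by
      rw [map_add, map_smul, map_smul, hAp u hu, hApb s hs]
      match_scalars <;> simp [Complex.ext_iff]
    have e3 : A (- u - s) = Complex.I • u - Complex.I • s := by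
      rw [map_sub, map_neg, hAp u hu, hApb s hs]
      match_scalars <;> simp [Complex.ext_iff]
    rw [e1, e2, e3]
    module
  have hskewA : ∀ x y, Bc (A x) y + Bc x (A y) = 0 := by
    intro x y
    obtain ⟨u, s, t, hu, hs, ht, rfl⟩ := hdec x
    obtain ⟨u', s', t', hu', hs', ht', rfl⟩ := hdec y
    rw [hAx u s t hu hs ht, hAx u' s' t' hu' hs' ht']
    simp only [map_add, map_smul, LinearMap.add_apply, LinearMap.smul_apply, smul_eq_mul]
    rw [hiso u hu u' hu', hiso_pb s hs s' hs', hqB t' ht' u (hp_le_M hu),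
      hqB t' ht' s (hpb_le_M hs), hqB' t ht u' (hp_le_M hu'), hqB' t ht s' (hpb_le_M hs')]
    ring
  have heig : Module.End.eigenspace A (-Complex.I) = p := by
    apply le_antisymm
    · intro x hx
      rw [Module.End.mem_eigenspace_iff] at hx
      obtain ⟨u, s, t, hu, hs, ht, rfl⟩ := hdec x
      rw [hAx u s t hu hs ht] at hx
      have h1 : Complex.I • s + Complex.I • s + Complex.I • t = 0 := by
        have h' := sub_eq_zero_of_eq hx
        rw [← h']
        module
      have h1' : Complex.I • (s + s + t) = 0 := by
        rw [smul_add, smul_add]; exact h1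
      have h2 : s + s + t = 0 :=
        (smul_eq_zero.mp h1').resolve_left Complex.I_ne_zero
      have hss : s + s ∈ pb := Submodule.add_mem _ hs hs
      have hts : s + s = -t := by
        have : s + s + t - t = 0 - t := by rw [h2]
        simpa using this
      have hdisj : Disjoint pb q := Disjoint.mono_left hpb_le_M hMq.disjoint
      have h0 : s + s = 0 := by
        rw [Submodule.disjoint_def] at hdisj
        exact hdisj _ hss (hts ▸ Submodule.neg_mem _ ht)
      have hs0 : s = 0 := by
        have h2s : (2:ℂ) • s = 0 := by rw [two_smul]; exact h0
        simpa using (smul_eq_zero.mp h2s).resolve_left (by norm_num)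
      have ht0 : t = 0 := by rw [hs0] at h2; simpa using h2
      simpa [hs0, ht0] using hu
    · intro x hx
      rw [Module.End.mem_eigenspace_iff]
      exact hAp x hx
  -- the real endomorphism
  set Fr : V →ₗ[ℝ] V := πre ∘ₗ (A.restrictScalars ℝ) ∘ₗ ((TensorProduct.mk ℝ ℂ V) 1) with hFr
  have hFrv : ∀ v : V, Fr v = πre (A ((1:ℂ) ⊗ₜ[ℝ] v)) := fun v => rfl
  clear_value Fr
  have hA1 : ∀ v : V, A ((1:ℂ) ⊗ₜ[ℝ] v) = (1:ℂ) ⊗ₜ[ℝ] (Fr v) := by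
    intro v
    have hfix : σ (A ((1:ℂ) ⊗ₜ[ℝ] v)) = A ((1:ℂ) ⊗ₜ[ℝ] v) := by
      rw [hσA, σ_one_tmul]
    have hreal := real_of_σ_fixed hfix
    conv_lhs => rw [hreal]
    rw [hFrv]
  have hbase : LinearMap.baseChange ℂ Fr = A := by
    apply LinearMap.ext
    intro x
    induction x using TensorProduct.induction_on with
    | zero => simp
    | tmul c v =>
      have h1 : (c : ℂ) ⊗ₜ[ℝ] v = c • ((1:ℂ) ⊗ₜ[ℝ] v) := by
        rw [TensorProduct.smul_tmul', smul_eq_mul, mul_one]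
      rw [LinearMap.baseChange_tmul, h1, map_smul, hA1]
      rw [TensorProduct.smul_tmul', smul_eq_mul, mul_one]
    | add a b ha hb => rw [map_add, map_add, ha, hb]
  have hFr3 : Fr ∘ₗ Fr ∘ₗ Fr + Fr = 0 := by
    apply LinearMap.ext
    intro v
    have h := h3 ((1:ℂ) ⊗ₜ[ℝ] v)
    rw [hA1, hA1, hA1, ← TensorProduct.tmul_add] at h
    have h0 := one_tmul_injective (h.trans (TensorProduct.tmul_zero V (1:ℂ)).symm)
    simpa using h0
  have hFrs : ∀ x y : V, ⟪Fr x, y⟫_ℝ + ⟪x, Fr y⟫_ℝ = 0 := by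
    intro x y
    have h := hskewA ((1:ℂ) ⊗ₜ[ℝ] x) ((1:ℂ) ⊗ₜ[ℝ] y)
    rw [hA1, hA1, Bc_one_tmul, Bc_one_tmul] at h
    exact_mod_cast h
  refine ⟨⟨Fr, hFr3, hFrs⟩, ?_⟩
  show Module.End.eigenspace (LinearMap.baseChange ℂ Fr) (-Complex.I) = p
  rw [hbase]
  exact heig

end Stmt4Aux

/-- The map sending a skew-adjoint `f`-structure `F` on a real inner product
space to the `(-i)`-eigenspace of its complexification is injective, and its range is
exactly the set of isotropic complex subspaces of `ℂ ⊗ V` (for the complex-bilinear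
extension of the inner product); i.e. it is a bijection onto that set. -/
theorem stmt_4 (V : Type*) [NormedAddCommGroup V] [InnerProductSpace ℝ V]
    [FiniteDimensional ℝ V] :
    Function.Injective
      (fun F : {F : V →ₗ[ℝ] V //
          F ∘ₗ F ∘ₗ F + F = 0 ∧ ∀ x y : V, ⟪F x, y⟫_ℝ + ⟪x, F y⟫_ℝ = 0} =>
        Module.End.eigenspace (LinearMap.baseChange ℂ F.1) (-Complex.I)) ∧
    Set.range
      (fun F : {F : V →ₗ[ℝ] V //
          F ∘ₗ F ∘ₗ F + F = 0 ∧ ∀ x y : V, ⟪F x, y⟫_ℝ + ⟪x, F y⟫_ℝ = 0} =>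
        Module.End.eigenspace (LinearMap.baseChange ℂ F.1) (-Complex.I)) =
      {p : Submodule ℂ (ℂ ⊗[ℝ] V) | ∀ v ∈ p, ∀ w ∈ p,
        LinearMap.BilinForm.baseChange ℂ
          (innerₗ V : LinearMap.BilinForm ℝ V) v w = 0} := by
  constructor
  · exact Stmt4Aux.injective_part
  · ext p
    simp only [Set.mem_range, Set.mem_setOf_eq]
    constructor
    · rintro ⟨⟨F, hF3, hFs⟩, rfl⟩
      intro v hv w hw
      have hv' := Module.End.mem_eigenspace_iff.mp hv
      have hw' := Module.End.mem_eigenspace_iff.mp hw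
      have h := Stmt4Aux.baseChange_skew F hFs v w
      rw [hv', hw'] at h
      simp only [map_smul, LinearMap.smul_apply, smul_eq_mul] at h
      show Stmt4Aux.Bc v w = 0
      have h2 : (-2 * Complex.I) * Stmt4Aux.Bc v w = 0 := by linear_combination h
      have hne : (-2 * Complex.I) ≠ 0 :=
        mul_ne_zero (by norm_num) Complex.I_ne_zero
      exact (mul_eq_zero.mp h2).resolve_left hne
    · intro hp
      exact Stmt4Aux.exists_F_of_isotropic p hp
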